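/- Let I be a Borel-fixed ideal generated in degree m (all minimal generators of degree m) with g minimal generators. Then dim_K I_{m+1} = Σ_{x^A ∈ G(I)} (n + 1 − max(A)), where G(I) is the set of minimal generators and max(A) is the largest variable index in x^A, and the variables are x_0,...,x_n. -/

import Mathlib

open MvPolynomial Finsupp

/-- `I` is a monomial ideal: generated by monomials. -/
def IsMonomialIdeal {n : ℕ} {K : Type*} [Field K]
    (I : Ideal (MvPolynomial (Fin (n + 1)) K)) : Prop :=
  ∃ S : Set (Fin (n + 1) →₀ ℕ),
    I = Ideal.span ((fun A => MvPolynomial.monomial A (1 : K)) '' S)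

/-- The Borel-fixed condition. -/
def BorelFixed {n : ℕ} {K : Type*} [Field K]
    (I : Ideal (MvPolynomial (Fin (n + 1)) K)) : Prop :=
  IsMonomialIdeal I ∧
    ∀ (A : Fin (n + 1) →₀ ℕ) (i : Fin n),
      MvPolynomial.monomial (A + Finsupp.single i.succ 1) (1 : K) ∈ I →
      MvPolynomial.monomial (A + Finsupp.single i.castSucc 1) (1 : K) ∈ I

/-- `x^A` is a minimal monomial generator of the monomial ideal `I`. -/
def MinGen {n : ℕ} {K : Type*} [Field K]
    (I : Ideal (MvPolynomial (Fin (n + 1)) K)) (A : Fin (n + 1) →₀ ℕ) : Prop :=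
  MvPolynomial.monomial A (1 : K) ∈ I ∧
    ∀ i : Fin (n + 1), A i ≠ 0 →
      MvPolynomial.monomial (A - Finsupp.single i 1) (1 : K) ∉ I

/-- The dimension over `K` of the degree-`d` graded piece of an ideal. -/
noncomputable def hilb {n : ℕ} {K : Type*} [Field K]
    (I : Ideal (MvPolynomial (Fin (n + 1)) K)) (d : ℕ) : ℕ :=
  Module.finrank K
    ↥(Submodule.restrictScalars K I ⊓
        MvPolynomial.homogeneousSubmodule (Fin (n + 1)) K d)


section BorelGrowthAux
variable {n : ℕ} {K : Type*} [Field K]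


variable {n : ℕ} {K : Type*} [Field K]

/-- degree over univ -/
lemma deg_eq_sum_univ (A : Fin (n+1) →₀ ℕ) : A.degree = ∑ i, A i := by
  rw [Finsupp.degree]
  exact Finset.sum_subset (Finset.subset_univ _) (by simp [Finsupp.notMem_support_iff])

lemma deg_add (A B : Fin (n+1) →₀ ℕ) : (A + B).degree = A.degree + B.degree := by
  simp [deg_eq_sum_univ, Finset.sum_add_distrib]

lemma deg_single_one (i : Fin (n+1)) : (Finsupp.single i 1 : Fin (n+1) →₀ ℕ).degree = 1 := by
  simp [deg_eq_sum_univ, Finsupp.single_apply]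

lemma deg_mono {A B : Fin (n+1) →₀ ℕ} (h : A ≤ B) : A.degree ≤ B.degree := by
  rw [deg_eq_sum_univ, deg_eq_sum_univ]
  exact Finset.sum_le_sum fun i _ => h i

lemma eq_of_le_of_deg_eq {A B : Fin (n+1) →₀ ℕ} (h : A ≤ B) (hd : A.degree = B.degree) :
    A = B := by
  have h1 : B - A + A = B := tsub_add_cancel_of_le h
  have h2 : (B - A).degree = 0 := by
    have := deg_add (B - A) A
    rw [h1, hd] at this; omega
  rw [Finsupp.degree_eq_zero_iff] at h2
  rw [← h1, h2, zero_add]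

lemma deg_eq_one {A : Fin (n+1) →₀ ℕ} (h : A.degree = 1) : ∃ j, A = Finsupp.single j 1 := by
  have hne : A.support.Nonempty := by
    rw [Finsupp.support_nonempty_iff]; rintro rfl; simp at h
  obtain ⟨j, hj⟩ := hne
  have hj1 : 1 ≤ A j := by rwa [Nat.one_le_iff_ne_zero, ← Finsupp.mem_support_iff]
  have hle := Finsupp.le_degree j A
  refine ⟨j, ?_⟩
  have hother : ∀ i, i ≠ j → A i = 0 := by
    intro i hi
    by_contra hne0
    have hi' : i ∈ A.support := Finsupp.mem_support_iff.mpr hne0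
    have hsub : ({i, j} : Finset (Fin (n+1))) ⊆ A.support := by
      intro x hx; simp at hx; rcases hx with rfl | rfl <;> assumption
    have : A i + A j ≤ A.degree := by
      rw [Finsupp.degree]
      calc A i + A j = ∑ x ∈ ({i, j} : Finset _), A x := (Finset.sum_pair hi).symm
        _ ≤ _ := Finset.sum_le_sum_of_subset hsub
    have : 1 ≤ A i := Nat.one_le_iff_ne_zero.mpr hne0
    omega
  ext i
  rcases eq_or_ne i j with rfl | hij
  · simp; omega
  · simp [Finsupp.single_apply, hij.symm, Ne.symm hij, hother i hij]

variable {I : Ideal (MvPolynomial (Fin (n + 1)) K)}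

lemma mono_mem_of_le {A B : Fin (n+1) →₀ ℕ} (h : A ≤ B)
    (hA : monomial A (1 : K) ∈ I) : monomial B (1 : K) ∈ I := by
  have : monomial B (1 : K) = monomial (B - A) 1 * monomial A 1 := by
    rw [monomial_mul, one_mul, tsub_add_cancel_of_le h]
  rw [this]
  exact Ideal.mul_mem_left _ _ hA

lemma mem_support_monomial (B : Fin (n+1) →₀ ℕ) :
    B ∈ (monomial B (1 : K)).support := by
  classical
  rw [support_monomial]
  simp

lemma exists_minGen (hmono : IsMonomialIdeal I) {B : Fin (n+1) →₀ ℕ}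
    (hB : monomial B (1 : K) ∈ I) : ∃ A, MinGen I A ∧ A ≤ B := by
  obtain ⟨S, hS⟩ := hmono
  have hex : ∃ d, ∃ C, C ≤ B ∧ monomial C (1 : K) ∈ I ∧ C.degree = d :=
    ⟨B.degree, B, le_rfl, hB, rfl⟩
  classical
  obtain ⟨C, hCB, hCI, hCd⟩ := Nat.find_spec hex
  refine ⟨C, ⟨hCI, ?_⟩, hCB⟩
  intro i hi hcon
  have hsingle : Finsupp.single i 1 ≤ C := Finsupp.single_le_iff.mpr (by omega)
  have hCeq : C - Finsupp.single i 1 + Finsupp.single i 1 = C := tsub_add_cancel_of_le hsingle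
  have hdlt : (C - Finsupp.single i 1).degree < Nat.find hex := by
    have := deg_add (C - Finsupp.single i 1) (Finsupp.single i 1)
    rw [hCeq, deg_single_one] at this
    omega
  exact Nat.find_min hex hdlt ⟨C - Finsupp.single i 1, le_trans tsub_le_self hCB, hcon, rfl⟩

lemma borel_chain (hI : BorelFixed I) (C : Fin (n+1) →₀ ℕ) :
    ∀ (i j : Fin (n+1)), j ≤ i → monomial (C + Finsupp.single i 1) (1 : K) ∈ I →
      monomial (C + Finsupp.single j 1) (1 : K) ∈ I := by
  intro i
  induction i using Fin.induction with
  | zero =>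
    intro j hj h
    rw [Fin.le_zero_iff] at hj
    subst hj; exact h
  | succ k ih =>
    intro j hj h
    rcases eq_or_lt_of_le hj with heq | hlt
    · subst heq; exact h
    · have h' : monomial (C + Finsupp.single k.castSucc 1) (1 : K) ∈ I := hI.2 C k h
      refine ih j ?_ h'
      have : (j : ℕ) < (k : ℕ) + 1 := by
        simpa [Fin.lt_def] using hlt
      exact Fin.le_def.mpr (by simpa using Nat.lt_succ_iff.mp this)

lemma exists_decomp (hI : BorelFixed I) {m : ℕ} {G : Finset (Fin (n + 1) →₀ ℕ)}
    (hG : ∀ A : Fin (n + 1) →₀ ℕ, A ∈ G ↔ MinGen I A)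
    (hdeg : ∀ A ∈ G, A.degree = m)
    {B : Fin (n+1) →₀ ℕ} (hBI : monomial B (1 : K) ∈ I) (hBdeg : B.degree = m + 1) :
    ∃ A ∈ G, ∃ j : Fin (n+1), (A.support.sup fun j => (j : ℕ)) ≤ (j : ℕ) ∧
      B = A + Finsupp.single j 1 := by
  classical
  set J : Finset (Fin (n+1)) := Finset.univ.filter
    (fun j => monomial (B - Finsupp.single j 1) (1 : K) ∈ I ∧ Finsupp.single j 1 ≤ B) with hJ
  have hJne : J.Nonempty := by
    obtain ⟨A0, hA0min, hA0le⟩ := exists_minGen hI.1 hBI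
    have hA0G : A0 ∈ G := (hG A0).mpr hA0min
    have hA0deg : A0.degree = m := hdeg A0 hA0G
    have hBA0 : (B - A0).degree = 1 := by
      have h1 : A0 + (B - A0) = B := add_tsub_cancel_of_le hA0le
      have := deg_add A0 (B - A0)
      rw [h1, hA0deg, hBdeg] at this
      omega
    obtain ⟨j0, hj0⟩ := deg_eq_one hBA0
    have hBeq : B = A0 + Finsupp.single j0 1 := by
      rw [← hj0]
      exact (add_tsub_cancel_of_le hA0le).symm
    refine ⟨j0, Finset.mem_filter.mpr ⟨Finset.mem_univ _, ?_, ?_⟩⟩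
    · rw [hBeq, add_tsub_cancel_right]; exact hA0min.1
    · rw [hBeq]; exact self_le_add_left _ _
  set j : Fin (n+1) := J.max' hJne with hjdef
  have hjJ : j ∈ J := J.max'_mem hJne
  obtain ⟨-, hjI, hjle⟩ := Finset.mem_filter.mp hjJ
  set A : Fin (n+1) →₀ ℕ := B - Finsupp.single j 1 with hA
  have hBeq : B = A + Finsupp.single j 1 := (tsub_add_cancel_of_le hjle).symm
  have hAdeg : A.degree = m := by
    have := deg_add A (Finsupp.single j 1)
    rw [← hBeq, deg_single_one, hBdeg] at this
    omega
  have hAG : A ∈ G := by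
    rw [hG]
    obtain ⟨A', hA'min, hA'le⟩ := exists_minGen hI.1 hjI
    have hA'deg : A'.degree = m := hdeg A' ((hG A').mpr hA'min)
    have : A' = A := eq_of_le_of_deg_eq hA'le (by omega)
    rwa [← this]
  refine ⟨A, hAG, j, ?_, hBeq⟩
  by_contra hcon
  rw [not_le] at hcon
  obtain ⟨i, hisup, hji⟩ : ∃ i ∈ A.support, (j : ℕ) < (i : ℕ) := by
    by_contra h
    push_neg at h
    exact absurd (Finset.sup_le h) (not_le.mpr hcon)
  have hji' : j < i := Fin.lt_def.mpr hji
  have hAi : A i ≠ 0 := Finsupp.mem_support_iff.mp hisup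
  set C : Fin (n+1) →₀ ℕ := A - Finsupp.single i 1 with hC
  have hCA : C + Finsupp.single i 1 = A :=
    tsub_add_cancel_of_le (Finsupp.single_le_iff.mpr (by omega))
  have hmemA : monomial (C + Finsupp.single i 1) (1 : K) ∈ I := by
    rw [hCA]; exact ((hG A).mp hAG).1
  have hmemCj : monomial (C + Finsupp.single j 1) (1 : K) ∈ I :=
    borel_chain hI C i j (le_of_lt hji') hmemA
  have hBeq2 : B = (C + Finsupp.single j 1) + Finsupp.single i 1 := by
    rw [hBeq, ← hCA]; exact add_right_comm _ _ _
  have hiJ : i ∈ J := by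
    refine Finset.mem_filter.mpr ⟨Finset.mem_univ _, ?_, ?_⟩
    · rw [hBeq2, add_tsub_cancel_right]; exact hmemCj
    · rw [hBeq2]; exact self_le_add_left _ _
  exact absurd (J.le_max' i hiJ) (not_le.mpr hji')

lemma decomp_inj {A A' : Fin (n+1) →₀ ℕ} {j j' : Fin (n+1)}
    (hA : (A.support.sup fun i => (i : ℕ)) ≤ (j : ℕ))
    (hA' : (A'.support.sup fun i => (i : ℕ)) ≤ (j' : ℕ))
    (heq : A + Finsupp.single j 1 = A' + Finsupp.single j' 1) : A = A' ∧ j = j' := by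
  have hjj : j = j' := by
    by_contra hne
    have h1 : A' j = A j + 1 := by
      have := DFunLike.congr_fun heq j
      simpa [Finsupp.single_apply, Ne.symm hne] using this.symm
    have h2 : A j' = A' j' + 1 := by
      have := DFunLike.congr_fun heq j'
      simpa [Finsupp.single_apply, hne] using this
    have hj1 : (j : ℕ) ≤ (j' : ℕ) :=
      le_trans (Finset.le_sup (f := fun i : Fin (n+1) => (i : ℕ))
        (Finsupp.mem_support_iff.mpr (by omega))) hA'
    have hj2 : (j' : ℕ) ≤ (j : ℕ) :=
      le_trans (Finset.le_sup (f := fun i : Fin (n+1) => (i : ℕ))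
        (Finsupp.mem_support_iff.mpr (by omega))) hA
    exact hne (Fin.ext (le_antisymm hj1 hj2))
  subst hjj
  exact ⟨add_right_cancel heq, rfl⟩

lemma card_filter_ge (t : ℕ) :
    (Finset.univ.filter fun j : Fin (n+1) => t ≤ (j : ℕ)).card = n + 1 - t := by
  classical
  rw [← Finset.card_range (n + 1 - t)]
  refine Finset.card_bij' (fun a _ => (a : ℕ) - t)
    (fun b hb => (⟨b + t, by simp only [Finset.mem_range] at hb; omega⟩ : Fin (n+1)))
    ?_ ?_ ?_ ?_
  · intro a ha
    simp only [Finset.mem_filter, Finset.mem_univ, true_and] at ha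
    have := a.isLt
    simp only [Finset.mem_range]
    omega
  · intro b hb
    simp only [Finset.mem_range] at hb
    simp only [Finset.mem_filter, Finset.mem_univ, true_and]
    omega
  · intro a ha
    simp only [Finset.mem_filter, Finset.mem_univ, true_and] at ha
    apply Fin.ext
    simp
    omega
  · intro b hb
    simp only [Finset.mem_range] at hb
    simp

theorem borel_growth_formula' 
    (hI : BorelFixed I) (m : ℕ)
    (G : Finset (Fin (n + 1) →₀ ℕ))
    (hG : ∀ A : Fin (n + 1) →₀ ℕ, A ∈ G ↔ MinGen I A)
    (hdeg : ∀ A ∈ G, (A.sum fun _ e => e) = m) :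
    Module.finrank K
      ↥(Submodule.restrictScalars K I ⊓
        MvPolynomial.homogeneousSubmodule (Fin (n + 1)) K (m+1)) =
      ∑ A ∈ G, (n + 1 - A.support.sup fun j => (j : ℕ)) := by
  classical
  obtain ⟨S, hS⟩ := hI.1
  have hdeg' : ∀ A ∈ G, A.degree = m := hdeg
  set maxd : (Fin (n+1) →₀ ℕ) → ℕ := fun A => A.support.sup fun j => (j : ℕ) with hmaxd
  set P := G.sigma (fun A => Finset.univ.filter fun j : Fin (n+1) => maxd A ≤ (j : ℕ)) with hP
  set T := P.image (fun p => p.1 + Finsupp.single p.2 1) with hT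
  have hTmem : ∀ B, B ∈ T ↔ (monomial B (1 : K) ∈ I ∧ B.degree = m + 1) := by
    intro B
    constructor
    · rw [hT, Finset.mem_image]
      rintro ⟨⟨A, j⟩, hp, rfl⟩
      rw [hP, Finset.mem_sigma] at hp
      obtain ⟨hAG, hj⟩ := hp
      refine ⟨mono_mem_of_le (self_le_add_right _ _) ((hG A).mp hAG).1, ?_⟩
      rw [deg_add, deg_single_one, hdeg' A hAG]
    · rintro ⟨hBI, hBd⟩
      obtain ⟨A, hAG, j, hmax, hBeq⟩ := exists_decomp hI hG hdeg' hBI hBd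
      rw [hT, Finset.mem_image]
      refine ⟨⟨A, j⟩, ?_, hBeq.symm⟩
      rw [hP, Finset.mem_sigma]
      exact ⟨hAG, by simpa [hmaxd] using hmax⟩
  have hinj : Set.InjOn (fun p : (_ : Fin (n+1) →₀ ℕ) × Fin (n+1) =>
      p.1 + Finsupp.single p.2 1) ↑P := by
    rintro ⟨A, j⟩ hp ⟨A', j'⟩ hq heq
    rw [Finset.mem_coe, hP, Finset.mem_sigma] at hp hq
    obtain ⟨hAe, hje⟩ := decomp_inj (Finset.mem_filter.mp hp.2).2 (Finset.mem_filter.mp hq.2).2 heq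
    subst hAe; subst hje; rfl
  have hcard : T.card = P.card := Finset.card_image_of_injOn hinj
  have hspan : (Submodule.restrictScalars K I ⊓
        MvPolynomial.homogeneousSubmodule (Fin (n + 1)) K (m+1)) =
      Submodule.span K (Set.range (fun B : T => monomial (B : Fin (n+1) →₀ ℕ) (1 : K))) := by
    apply le_antisymm
    · intro p hp
      rw [Submodule.mem_inf] at hp
      obtain ⟨hpI, hphom⟩ := hp
      rw [Submodule.restrictScalars_mem] at hpI
      rw [mem_homogeneousSubmodule] at hphom
      rw [← p.support_sum_monomial_coeff]
      apply Submodule.sum_mem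
      intro v hv
      have hv0 : coeff v p ≠ 0 := MvPolynomial.mem_support_iff.mp hv
      have hvdeg : v.degree = m + 1 := by
        rw [Finsupp.degree_eq_weight_one]
        exact hphom hv0
      have hvI : monomial v (1 : K) ∈ I := by
        have hpI' := hpI
        rw [hS] at hpI'
        obtain ⟨s, hsS, hsle⟩ := mem_ideal_span_monomial_image.mp hpI' v hv
        exact mono_mem_of_le hsle (hS ▸ Ideal.subset_span (Set.mem_image_of_mem _ hsS))
      have hvT : v ∈ T := (hTmem v).mpr ⟨hvI, hvdeg⟩
      have hm : monomial v (coeff v p) = (coeff v p) • monomial v (1 : K) := by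
        rw [smul_monomial, smul_eq_mul, mul_one]
      rw [hm]
      exact Submodule.smul_mem _ _ (Submodule.subset_span ⟨⟨v, hvT⟩, rfl⟩)
    · rw [Submodule.span_le]
      rintro x ⟨⟨B, hBT⟩, rfl⟩
      obtain ⟨hBI, hBd⟩ := (hTmem B).mp hBT
      rw [SetLike.mem_coe, Submodule.mem_inf]
      exact ⟨Submodule.restrictScalars_mem _ _ _ |>.mpr hBI,
        (mem_homogeneousSubmodule _ _).mpr (isHomogeneous_monomial _ hBd)⟩
  have hli : LinearIndependent K (fun B : T => monomial (B : Fin (n+1) →₀ ℕ) (1 : K)) := by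
    have h1 := (basisMonomials (Fin (n+1)) K).linearIndependent
    have h2 := h1.comp (fun B : T => (B : Fin (n+1) →₀ ℕ)) Subtype.val_injective
    rw [coe_basisMonomials] at h2; exact h2
  have hfr := LinearEquiv.finrank_eq (LinearEquiv.ofEq _ _ hspan) (R := K)
  rw [hfr, finrank_span_eq_card hli, Fintype.card_coe, hcard, Finset.card_sigma]
  exact Finset.sum_congr rfl fun A _ => card_filter_ge (maxd A)

end BorelGrowthAux

/-- For a Borel-fixed ideal `I ⊆ K[x_0,…,x_n]` generated in degree `m` with
minimal generating set `G`, one has `dim I_{m+1} = ∑_{x^A ∈ G} (n + 1 − max(A))`,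
where `max(A)` is the largest variable index occurring in `x^A`. -/
theorem borel_growth_formula {n : ℕ} {K : Type*} [Field K]
    (I : Ideal (MvPolynomial (Fin (n + 1)) K)) (hI : BorelFixed I) (m : ℕ)
    (G : Finset (Fin (n + 1) →₀ ℕ))
    (hG : ∀ A : Fin (n + 1) →₀ ℕ, A ∈ G ↔ MinGen I A)
    (hdeg : ∀ A ∈ G, (A.sum fun _ e => e) = m) :
    hilb I (m + 1) = ∑ A ∈ G, (n + 1 - A.support.sup fun j => (j : ℕ)) := by
  unfold hilb
  exact borel_growth_formula' hI m G hG hdeg
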